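/- Suppose x̄ ∈ [0,1]^N satisfies 1^T x̄ + (δ/2)‖x̄‖² ≤ 1^T x• + (δ/2)‖x•‖², where x• is optimal for the regularized problem, and let e_i = [1 - (A x̄)_i]_+ with ‖e‖ ≤ ε. Define x = x̄ + e. Then x is feasible for the LP {x ≥ 0, A x ≥ 1} and satisfies (1^T x - 1^T x*)/(1^T x*) ≤ δ/2 + √N ε (d_max+1)/N, where x* is an LP optimum. -/
import Mathlib


theorem stmt_11 {N : ℕ} (hN : 0 < N) (A : Matrix (Fin N) (Fin N) ℝ) (dmax : ℕ)
    (δ ε : ℝ) (hδ : 0 < δ) (hε : 0 < ε)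
    (h01 : ∀ i j, A i j = 0 ∨ A i j = 1) (hdiag : ∀ i, A i i = 1)
    (xbar xs xb e x : Fin N → ℝ)
    (hxbar : ∀ i, 0 ≤ xbar i ∧ xbar i ≤ 1)
    (hxs : ((∀ i, 0 ≤ xs i ∧ xs i ≤ 1) ∧ ∀ i, 1 ≤ A.mulVec xs i) ∧
      ∀ y : Fin N → ℝ, ((∀ i, 0 ≤ y i ∧ y i ≤ 1) ∧ ∀ i, 1 ≤ A.mulVec y i) →
        ∑ i, xs i ≤ ∑ i, y i)
    (hreg : ∑ i, xbar i + δ / 2 * ∑ i, xbar i ^ 2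
      ≤ ∑ i, xb i + δ / 2 * ∑ i, xb i ^ 2)
    (happrox : ∑ i, xb i + δ / 2 * ∑ i, xb i ^ 2 ≤ (1 + δ / 2) * ∑ i, xs i)
    (hlower : (N : ℝ) / (dmax + 1) ≤ ∑ i, xs i)
    (he : ∀ i, e i = max 0 (1 - A.mulVec xbar i))
    (hE : Real.sqrt (∑ i, e i ^ 2) ≤ ε)
    (hx : ∀ i, x i = xbar i + e i) :
    (∀ i, 0 ≤ x i) ∧ (∀ i, 1 ≤ A.mulVec x i) ∧
    (∑ i, x i - ∑ i, xs i) / (∑ i, xs i)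
      ≤ δ / 2 + Real.sqrt N * ε * (dmax + 1) / N := by
  have hNpos : (0:ℝ) < N := by exact_mod_cast hN
  have hdpos : (0:ℝ) < (dmax:ℝ) + 1 := by positivity
  have hSpos : (0:ℝ) < ∑ i, xs i := lt_of_lt_of_le (by positivity) hlower
  have henn : ∀ i, 0 ≤ e i := fun i => (he i) ▸ le_max_left _ _
  have hAnn : ∀ i j, 0 ≤ A i j := fun i j => by rcases h01 i j with h | h <;> simp [h]
  -- feasibility
  have hxnn : ∀ i, 0 ≤ x i := fun i => (hx i) ▸ add_nonneg (hxbar i).1 (henn i)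
  have hfeas : ∀ i, 1 ≤ A.mulVec x i := by
    intro i
    have hsplit : A.mulVec x i = A.mulVec xbar i + ∑ j, A i j * e j := by
      simp only [Matrix.mulVec, dotProduct]
      rw [← Finset.sum_add_distrib]
      congr 1; ext j; rw [hx j]; ring
    have h1 : e i ≤ ∑ j, A i j * e j := by
      have := Finset.single_le_sum (f := fun j => A i j * e j)
        (fun j _ => mul_nonneg (hAnn i j) (henn j)) (Finset.mem_univ i)
      simpa [hdiag i] using this
    have h2 : 1 - A.mulVec xbar i ≤ e i := (he i) ▸ le_max_right _ _
    rw [hsplit]; linarith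
  refine ⟨hxnn, hfeas, ?_⟩
  -- sum of e bound
  have hesum : ∑ i, e i ≤ Real.sqrt N * ε := by
    have hcs : (∑ i, e i) ^ 2 ≤ N * ∑ i, e i ^ 2 := by
      simpa using sq_sum_le_card_mul_sum_sq (s := Finset.univ) (f := e)
    have hnn : 0 ≤ ∑ i, e i := Finset.sum_nonneg fun i _ => henn i
    have : ∑ i, e i ≤ Real.sqrt (N * ∑ i, e i ^ 2) := by
      rw [← Real.sqrt_sq hnn]
      exact Real.sqrt_le_sqrt hcs
    calc ∑ i, e i ≤ Real.sqrt (N * ∑ i, e i ^ 2) := this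
      _ = Real.sqrt N * Real.sqrt (∑ i, e i ^ 2) := Real.sqrt_mul (by positivity) _
      _ ≤ Real.sqrt N * ε := by
          exact mul_le_mul_of_nonneg_left hE (Real.sqrt_nonneg _)
  have hxbarsum : ∑ i, xbar i ≤ (1 + δ / 2) * ∑ i, xs i := by
    have h0 : 0 ≤ δ / 2 * ∑ i, xbar i ^ 2 := by positivity
    linarith
  have hxsum : ∑ i, x i = ∑ i, xbar i + ∑ i, e i := by
    rw [← Finset.sum_add_distrib]; exact Finset.sum_congr rfl fun i _ => hx i
  -- main bound
  rw [div_le_iff₀ hSpos]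
  have key : Real.sqrt N * ε ≤ Real.sqrt N * ε * (dmax + 1) / N * ∑ i, xs i := by
    have h1 : Real.sqrt N * ε * (dmax + 1) / N * ((N:ℝ) / (dmax + 1)) = Real.sqrt N * ε := by
      field_simp
    have h2 : Real.sqrt N * ε * (dmax + 1) / N * ((N:ℝ) / (dmax + 1)) ≤
        Real.sqrt N * ε * (dmax + 1) / N * ∑ i, xs i := by
      apply mul_le_mul_of_nonneg_left hlower
      have : 0 < Real.sqrt N := Real.sqrt_pos.mpr hNpos
      positivity
    linarith
  nlinarith [hxbarsum, hesum, hxsum]
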